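/- Let s > 0 be a real number and let θ(z, τ) = ∑_{k∈ℤ} exp(iπk²τ)·exp(2iπkz) be Jacobi's theta function (Mathlib's jacobiTheta₂ z τ). Then for z ∈ ℂ, one has θ(z, i·s) = 0 if and only if there exist integers m, n such that z = (m + 1/2) + (n + 1/2)·s·i. -/

import Mathlib

open Complex Real

noncomputable section

noncomputable def Complex.abs : AbsoluteValue ℂ ℝ where
  toFun z := ‖z‖
  map_mul' := norm_mul
  nonneg' := norm_nonneg
  eq_zero' _ := norm_eq_zero
  add_le' := norm_add_le

lemma Complex.abs_apply (z : ℂ) : Complex.abs z = ‖z‖ := rfl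

lemma Complex.norm_eq_abs (z : ℂ) : ‖z‖ = Complex.abs z := rfl

lemma Complex.abs_exp (z : ℂ) : Complex.abs (cexp z) = Real.exp z.re := Complex.norm_exp z

lemma Complex.abs_I : Complex.abs I = 1 := Complex.norm_I

lemma Complex.abs_two : Complex.abs 2 = 2 := by simp [Complex.abs_apply]

lemma Complex.abs_ofNat (n : ℕ) [n.AtLeastTwo] :
    Complex.abs (no_index (OfNat.ofNat n : ℂ)) = OfNat.ofNat n := by
  simp [Complex.abs_apply]

lemma two_I_sin (a : ℂ) : cexp (a * I) - cexp (-(a * I)) = 2 * I * Complex.sin a := by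
  rw [Complex.sin, neg_mul]
  linear_combination (cexp (a*I) - cexp (-(a*I))) * Complex.I_sq

lemma abs_cos_le' (z : ℂ) : Complex.abs (Complex.cos z) ≤ Real.exp |z.im| := by
  rw [Complex.cos]
  calc Complex.abs ((cexp (z*I) + cexp (-z*I))/2)
      ≤ (Complex.abs (cexp (z*I)) + Complex.abs (cexp (-z*I)))/2 := by
        rw [map_div₀]
        simp only [Complex.abs_ofNat]
        gcongr
        exact Complex.abs.add_le _ _
    _ ≤ (Real.exp |z.im| + Real.exp |z.im|)/2 := by
        gcongr <;> rw [Complex.abs_exp] <;> apply Real.exp_le_exp.2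
        · simp [Complex.mul_re]; exact neg_le_abs _
        · simp [Complex.mul_re]; exact le_abs_self _
    _ = Real.exp |z.im| := by ring

lemma abs_sin_le' (z : ℂ) : Complex.abs (Complex.sin z) ≤ Real.exp |z.im| := by
  rw [Complex.sin]
  calc Complex.abs ((cexp (-z*I) - cexp (z*I)) * I / 2)
      ≤ (Complex.abs (cexp (-z*I)) + Complex.abs (cexp (z*I)))/2 := by
        rw [map_div₀, map_mul, Complex.abs_I, mul_one, sub_eq_add_neg]
        simp only [Complex.abs_ofNat]
        gcongr
        calc Complex.abs _ ≤ _ := Complex.abs.add_le _ _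
          _ = _ := by rw [Complex.abs.map_neg]
    _ ≤ (Real.exp |z.im| + Real.exp |z.im|)/2 := by
        gcongr <;> rw [Complex.abs_exp] <;> apply Real.exp_le_exp.2
        · simp [Complex.mul_re]; exact le_abs_self _
        · simp [Complex.mul_re]; exact neg_le_abs _
    _ = Real.exp |z.im| := by ring

lemma abs_sin_succ_mul (n : ℕ) (z : ℂ) :
    Complex.abs (Complex.sin ((n + 1 : ℂ) * z)) ≤
      (n + 1) * Real.exp (n * |z.im|) * Complex.abs (Complex.sin z) := by
  induction n with
  | zero => simp
  | succ n ih =>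
    push_cast
    have h1 : ((n : ℂ) + 1 + 1) * z = ((n : ℂ) + 1) * z + z := by ring
    rw [h1, Complex.sin_add]
    have him : (((n : ℂ) + 1) * z).im = (n + 1) * z.im := by
      simp [Complex.mul_im]
    calc Complex.abs (Complex.sin (((n:ℂ)+1)*z) * Complex.cos z + Complex.cos (((n:ℂ)+1)*z) * Complex.sin z)
        ≤ Complex.abs (Complex.sin (((n:ℂ)+1)*z)) * Complex.abs (Complex.cos z)
          + Complex.abs (Complex.cos (((n:ℂ)+1)*z)) * Complex.abs (Complex.sin z) := by
          calc _ ≤ _ := Complex.abs.add_le _ _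
            _ = _ := by rw [map_mul, map_mul]
      _ ≤ ((n + 1) * Real.exp (n * |z.im|) * Complex.abs (Complex.sin z)) * Real.exp |z.im|
          + Real.exp ((n+1) * |z.im|) * Complex.abs (Complex.sin z) := by
          gcongr
          · exact abs_cos_le' z
          · calc Complex.abs (Complex.cos (((n:ℂ)+1)*z)) ≤ Real.exp |(((n:ℂ)+1)*z).im| := abs_cos_le' _
              _ = Real.exp ((n+1) * |z.im|) := by rw [him, abs_mul, _root_.abs_of_nonneg (by positivity : (0:ℝ) ≤ (n:ℝ)+1)]
      _ = ((n:ℝ) + 1 + 1) * Real.exp ((n+1) * |z.im|) * Complex.abs (Complex.sin z) := by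
          have h2 : Real.exp (((n:ℝ)+1) * |z.im|) = Real.exp (n * |z.im|) * Real.exp |z.im| := by
            rw [← Real.exp_add]; ring_nf
          rw [h2]; ring

lemma hasSum_theta_pairs (s : ℝ) (hs : 0 < s) (w : ℂ) :
    HasSum (fun j : ℕ => ((-1 : ℂ))^j * cexp (-(Real.pi:ℂ)*s*(j*(j+1)) - (Real.pi:ℂ)*I*w) *
      (2 * I * Complex.sin ((2*(j:ℂ)+1) * ((Real.pi:ℂ)*w))))
      (jacobiTheta₂ ((1 + I*s)/2 + w) (I*s)) := by
  have him : 0 < (I * (s:ℂ)).im := by simp [hs]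
  have H := (hasSum_jacobiTheta₂_term ((1+I*(s:ℂ))/2+w) him).nat_add_neg_add_one
  refine H.congr_fun fun j => ?_
  have t1 : jacobiTheta₂_term (j:ℤ) ((1+I*(s:ℂ))/2+w) (I*s) =
      ((-1:ℂ))^j * cexp (-(Real.pi:ℂ)*s*(j*(j+1)) - (Real.pi:ℂ)*I*w) *
        cexp (((2*(j:ℂ)+1) * ((Real.pi:ℂ)*w)) * I) := by
    rw [show ((-1:ℂ))^j = cexp ((j:ℂ)*((Real.pi:ℂ)*I)) by
      rw [Complex.exp_nat_mul, Complex.exp_pi_mul_I]]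
    rw [jacobiTheta₂_term, ← Complex.exp_add, ← Complex.exp_add]
    congr 1
    linear_combination ((Real.pi:ℂ)*j*s + (Real.pi:ℂ)*j^2*s) * Complex.I_sq
  have t2 : jacobiTheta₂_term (-((j:ℤ)+1)) ((1+I*(s:ℂ))/2+w) (I*s) =
      -(((-1:ℂ))^j * cexp (-(Real.pi:ℂ)*s*(j*(j+1)) - (Real.pi:ℂ)*I*w) *
        cexp (-(((2*(j:ℂ)+1) * ((Real.pi:ℂ)*w)) * I))) := by
    have hneg : -(((-1:ℂ))^j) = cexp ((-((j:ℤ)+1):ℤ)*((Real.pi:ℂ)*I)) := by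
      rw [Complex.exp_int_mul, Complex.exp_pi_mul_I]
      rw [zpow_neg]
      push_cast
      rw [zpow_add₀ (by norm_num : (-1:ℂ) ≠ 0), zpow_natCast, zpow_one]
      simp only [mul_neg, mul_one, neg_inv, neg_neg, neg_inj]
      refine eq_inv_of_mul_eq_one_left ?_
      rw [neg_mul_neg, ← pow_add, ← two_mul, pow_mul]
      norm_num
    rw [show -(((-1:ℂ))^j * cexp (-(Real.pi:ℂ)*s*(j*(j+1)) - (Real.pi:ℂ)*I*w) *
        cexp (-(((2*(j:ℂ)+1) * ((Real.pi:ℂ)*w)) * I))) =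
        (-(((-1:ℂ))^j)) * cexp (-(Real.pi:ℂ)*s*(j*(j+1)) - (Real.pi:ℂ)*I*w) *
        cexp (-(((2*(j:ℂ)+1) * ((Real.pi:ℂ)*w)) * I)) by ring]
    rw [hneg, jacobiTheta₂_term, ← Complex.exp_add, ← Complex.exp_add]
    congr 1
    push_cast
    linear_combination ((Real.pi:ℂ)*j*(j+1)*s) * Complex.I_sq
  rw [t1, t2, ← two_I_sin ((2*(j:ℂ)+1) * ((Real.pi:ℂ)*w))]
  ring

lemma theta_add_int (z τ : ℂ) (m : ℤ) : jacobiTheta₂ (z + m) τ = jacobiTheta₂ z τ := by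
  induction m using Int.induction_on with
  | zero => simp
  | succ k ih =>
    push_cast
    rw [show z + ((k:ℂ) + 1) = (z + (k:ℂ)) + 1 by ring, jacobiTheta₂_add_left]
    push_cast at ih
    exact ih
  | pred k ih =>
    push_cast
    push_cast at ih
    have h := jacobiTheta₂_add_left (z + (-(k:ℂ) - 1)) τ
    rw [show z + (-(k:ℂ) - 1) + 1 = z + -(k:ℂ) by ring] at h
    rw [← h]
    exact ih

lemma theta_add_int_mul_tau (z τ : ℂ) (n : ℤ) :
    jacobiTheta₂ (z + n * τ) τ = 0 ↔ jacobiTheta₂ z τ = 0 := by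
  induction n using Int.induction_on with
  | zero => simp
  | succ k ih =>
    push_cast
    push_cast at ih
    rw [show z + ((k:ℂ) + 1) * τ = (z + (k:ℂ) * τ) + τ by ring, jacobiTheta₂_add_left']
    simp only [mul_eq_zero, Complex.exp_ne_zero, false_or]
    exact ih
  | pred k ih =>
    push_cast
    push_cast at ih
    have h := jacobiTheta₂_add_left' (z + (-(k:ℂ) - 1) * τ) τ
    rw [show z + (-(k:ℂ) - 1) * τ + τ = z + -(k:ℂ) * τ by ring] at h
    rw [h] at ih
    simp only [mul_eq_zero, Complex.exp_ne_zero, false_or] at ih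
    exact ih

lemma theta_shift_zero_iff (z τ : ℂ) (m n : ℤ) :
    jacobiTheta₂ (z + m + n * τ) τ = 0 ↔ jacobiTheta₂ z τ = 0 := by
  rw [show z + (m:ℂ) + (n:ℂ) * τ = (z + (n:ℂ) * τ) + (m:ℂ) by ring, theta_add_int,
    theta_add_int_mul_tau]

lemma theta_halfpoint (s : ℝ) (hs : 0 < s) : jacobiTheta₂ ((1 + I * s)/2) (I * s) = 0 := by
  have H := hasSum_theta_pairs s hs 0
  have h0 : (fun j : ℕ => ((-1 : ℂ))^j * cexp (-(Real.pi:ℂ)*s*(j*(j+1)) - (Real.pi:ℂ)*I*0) *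
      (2 * I * Complex.sin ((2*(j:ℂ)+1) * ((Real.pi:ℂ)*0)))) = fun _ => (0:ℂ) := by
    funext j; simp
  rw [h0, add_zero] at H
  exact (H.unique hasSum_zero).symm ▸ rfl

lemma two_mul_add_one_le_three_pow (m : ℕ) : (2*m+1 : ℝ) ≤ 3^m := by
  induction m with
  | zero => norm_num
  | succ m ih =>
    push_cast
    push_cast at ih
    calc (2*((m:ℝ)+1)+1) = (2*m+1) + 2 := by ring
      _ ≤ 3^m + 2 := by linarith
      _ ≤ 3^m + 2*3^m := by nlinarith [pow_pos (by norm_num : (0:ℝ) < 3) m]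
      _ = 3^(m+1) := by ring

lemma exp_pi_gt_16 : (16:ℝ) < Real.exp Real.pi := by
  have h1 : (2.7182818283:ℝ) < Real.exp 1 := Real.exp_one_gt_d9
  have h3 : (16:ℝ) < Real.exp 1 ^ (3:ℕ) := by
    calc (16:ℝ) < 2.7182818283^(3:ℕ) := by norm_num
      _ ≤ Real.exp 1 ^ (3:ℕ) := by gcongr <;> norm_num [h1.le]
  calc (16:ℝ) < Real.exp 1 ^ (3:ℕ) := h3
    _ = Real.exp 3 := by rw [← Real.exp_nat_mul]; norm_num
    _ ≤ Real.exp Real.pi := Real.exp_le_exp.2 (by linarith [Real.pi_gt_three])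

set_option maxHeartbeats 1000000 in
lemma local_zero (s : ℝ) (hs : 1 ≤ s) (w : ℂ) (hre : |w.re| ≤ 1/2) (him : |w.im| ≤ s/2)
    (h : jacobiTheta₂ ((1 + I * s)/2 + w) (I * s) = 0) : w = 0 := by
  have hs0 : 0 < s := lt_of_lt_of_le one_pos hs
  set σ := Complex.abs (Complex.sin ((Real.pi:ℂ) * w)) with hσ
  set D := 2 * Real.exp (Real.pi * w.im) with hD
  have hD0 : 0 < D := by positivity
  set G := fun j : ℕ => ((-1 : ℂ))^j * cexp (-(Real.pi:ℂ)*s*(j*(j+1)) - (Real.pi:ℂ)*I*w) *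
      (2 * I * Complex.sin ((2*(j:ℂ)+1) * ((Real.pi:ℂ)*w))) with hG
  have HG : HasSum G 0 := h ▸ hasSum_theta_pairs s hs0 w
  have hnorm : ∀ j : ℕ, Complex.abs (G j) =
      Real.exp (-Real.pi*s*(j*(j+1)) + Real.pi*w.im) *
        (2 * Complex.abs (Complex.sin ((2*(j:ℂ)+1) * ((Real.pi:ℂ)*w)))) := by
    intro j
    rw [hG]
    simp only [map_mul, map_pow, map_neg_eq_map, map_one, one_pow, one_mul,
      Complex.abs_exp, Complex.abs_two, Complex.abs_I, mul_one]
    congr 2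
    simp [Complex.sub_re, Complex.mul_re, Complex.mul_im]
  -- value at 0
  have hG0 : Complex.abs (G 0) = D * σ := by
    rw [hnorm 0,
      show ((2*((0:ℕ):ℂ)+1) * ((Real.pi:ℂ)*w)) = (Real.pi:ℂ) * w by push_cast; ring,
      show -Real.pi*s*(((0:ℕ):ℝ)*(((0:ℕ):ℝ)+1)) + Real.pi*w.im = Real.pi*w.im by push_cast; ring,
      hD, hσ]
    ring
  set r := 3 * Real.exp (-Real.pi) with hr
  have hr0 : 0 ≤ r := by positivity
  have hr16 : r < 3/16 := by
    rw [hr, Real.exp_neg]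
    have h16 := exp_pi_gt_16
    have hpos : (0:ℝ) < Real.exp Real.pi := Real.exp_pos _
    rw [show (3:ℝ)/16 = 3 * (16:ℝ)⁻¹ by norm_num]
    have : (Real.exp Real.pi)⁻¹ < (16:ℝ)⁻¹ := by
      apply inv_strictAnti₀ <;> linarith
    linarith
  have hr1 : r < 1 := by linarith
  -- bound each shifted term
  have hbound : ∀ j : ℕ, Complex.abs (G (j+1)) ≤ D * σ * r^(j+1) := by
    intro j
    set m := j + 1 with hm
    have hm1 : 1 ≤ m := Nat.le_add_left 1 j
    have hsin : Complex.abs (Complex.sin ((2*(m:ℂ)+1) * ((Real.pi:ℂ)*w))) ≤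
        (2*m+1) * Real.exp ((2*m) * (Real.pi * (s/2))) * σ := by
      have hcast : ((2*(m:ℂ))+1) = (((2*m : ℕ):ℂ) + 1) := by push_cast; ring
      rw [hcast]
      have := abs_sin_succ_mul (2*m) ((Real.pi:ℂ) * w)
      have himw : |((Real.pi:ℂ) * w).im| = Real.pi * |w.im| := by
        rw [show ((Real.pi:ℂ) * w).im = Real.pi * w.im by simp, abs_mul,
          _root_.abs_of_nonneg Real.pi_pos.le]
      rw [himw] at this
      refine this.trans ?_
      rw [hσ]
      have h2m : ((2*m:ℕ):ℝ) = 2*(m:ℝ) := by push_cast; ring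
      rw [h2m]
      have hexp : Real.exp ((2*(m:ℝ)) * (Real.pi * |w.im|)) ≤
          Real.exp ((2*(m:ℝ)) * (Real.pi * (s/2))) :=
        Real.exp_le_exp.2 (mul_le_mul_of_nonneg_left
          (mul_le_mul_of_nonneg_left him Real.pi_pos.le) (by positivity))
      exact mul_le_mul_of_nonneg_right
        (mul_le_mul_of_nonneg_left hexp (by positivity)) (Complex.abs.nonneg _)
    calc Complex.abs (G m) = Real.exp (-Real.pi*s*(m*(m+1)) + Real.pi*w.im) *
          (2 * Complex.abs (Complex.sin ((2*(m:ℂ)+1) * ((Real.pi:ℂ)*w)))) := hnorm m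
      _ ≤ Real.exp (-Real.pi*s*(m*(m+1)) + Real.pi*w.im) *
          (2 * ((2*m+1) * Real.exp ((2*m) * (Real.pi * (s/2))) * σ)) := by
          gcongr
      _ = D * σ * ((2*m+1) * Real.exp (-Real.pi*s*(m*m))) := by
          have hxp : Real.exp (-Real.pi*s*((m:ℝ)*((m:ℝ)+1)) + Real.pi*w.im) *
              Real.exp ((2*(m:ℝ)) * (Real.pi*(s/2))) =
              Real.exp (Real.pi*w.im) * Real.exp (-Real.pi*s*((m:ℝ)*(m:ℝ))) := by
            rw [← Real.exp_add, ← Real.exp_add]; congr 1; ring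
          calc Real.exp (-Real.pi*s*((m:ℝ)*((m:ℝ)+1)) + Real.pi*w.im) *
                (2 * ((2*(m:ℝ)+1) * Real.exp ((2*(m:ℝ)) * (Real.pi*(s/2))) * σ)) =
              (Real.exp (-Real.pi*s*((m:ℝ)*((m:ℝ)+1)) + Real.pi*w.im) *
                Real.exp ((2*(m:ℝ)) * (Real.pi*(s/2)))) * (2 * ((2*(m:ℝ)+1) * σ)) := by ring
            _ = D * σ * ((2*m+1) * Real.exp (-Real.pi*s*(m*m))) := by rw [hxp, hD]; ring
      _ ≤ D * σ * ((3:ℝ)^m * Real.exp (-Real.pi*m)) := by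
          have hσ0 : 0 ≤ σ := Complex.abs.nonneg _
          have hm1' : (1:ℝ) ≤ (m:ℝ) := by exact_mod_cast hm1
          have t1 : (2*(m:ℝ)+1) ≤ 3^m := two_mul_add_one_le_three_pow m
          have t2 : Real.exp (-Real.pi*s*((m:ℝ)*(m:ℝ))) ≤ Real.exp (-Real.pi*(m:ℝ)) := by
            apply Real.exp_le_exp.2
            have key : Real.pi * (m:ℝ) ≤ Real.pi * (s*((m:ℝ)*(m:ℝ))) := by
              apply mul_le_mul_of_nonneg_left _ Real.pi_pos.le
              nlinarith
            nlinarith [key]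
          exact mul_le_mul_of_nonneg_left
            (mul_le_mul t1 t2 (Real.exp_pos _).le (by positivity)) (by positivity)
      _ = D * σ * r^m := by
          rw [hr, mul_pow, ← Real.exp_nat_mul]
          ring_nf
  -- sum up
  have hgeom : Summable (fun j : ℕ => D * σ * r^(j+1)) := by
    apply Summable.mul_left
    exact (summable_geometric_of_lt_one hr0 hr1).comp_injective (add_left_injective 1)
  have hSumm : Summable (fun j : ℕ => Complex.abs (G (j+1))) :=
    Summable.of_nonneg_of_le (fun j => Complex.abs.nonneg _) hbound hgeom
  have Hshift : HasSum (fun n : ℕ => G (n+1)) (-G 0) := by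
    rw [hasSum_nat_add_iff 1]
    simpa using HG
  have key : Complex.abs (G 0) ≤ D * σ * (r * (1-r)⁻¹) := by
    have h1 : Complex.abs (G 0) = Complex.abs (∑' n, G (n+1)) := by
      rw [Hshift.tsum_eq, map_neg_eq_map]
    rw [h1]
    calc Complex.abs (∑' n, G (n+1)) = ‖∑' n, G (n+1)‖ := (Complex.norm_eq_abs _).symm
      _ ≤ ∑' n, ‖G (n+1)‖ :=
          norm_tsum_le_tsum_norm (by simpa only [Complex.norm_eq_abs] using hSumm)
      _ = ∑' n, Complex.abs (G (n+1)) := by simp only [Complex.norm_eq_abs]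
      _ ≤ ∑' n : ℕ, D * σ * r^(n+1) := Summable.tsum_le_tsum hbound hSumm hgeom
      _ = D * σ * (r * (1-r)⁻¹) := by
          rw [tsum_mul_left]
          congr 1
          rw [show (fun n : ℕ => r^(n+1)) = fun n : ℕ => r * r^n from funext fun n => by ring]
          rw [tsum_mul_left, tsum_geometric_of_lt_one hr0 hr1]
  rw [hG0] at key
  have hfrac : r * (1-r)⁻¹ < 1 := by
    rw [mul_inv_lt_iff₀ (by linarith)]
    linarith
  have hσ0 : σ = 0 := by
    have hσnn : 0 ≤ σ := Complex.abs.nonneg _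
    by_contra hne
    have hσpos : 0 < σ := hσnn.lt_of_ne (Ne.symm hne)
    have hDσ : 0 < D * σ := mul_pos hD0 hσpos
    have hlt := mul_lt_mul_of_pos_left hfrac hDσ
    rw [mul_one] at hlt
    linarith
  -- conclude w = 0
  have hsin0 : Complex.sin ((Real.pi:ℂ) * w) = 0 := by
    rwa [hσ, map_eq_zero] at hσ0
  rw [Complex.sin_eq_zero_iff] at hsin0
  obtain ⟨k, hk⟩ := hsin0
  have hw : w = (k:ℂ) := by
    have hπ : (Real.pi:ℂ) ≠ 0 := Complex.ofReal_ne_zero.2 Real.pi_ne_zero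
    rw [mul_comm ((k:ℂ)) ((Real.pi:ℂ))] at hk
    exact mul_left_cancel₀ hπ hk
  have hk0 : k = 0 := by
    have : |(k:ℝ)| ≤ 1/2 := by
      have : w.re = (k:ℝ) := by rw [hw]; simp
      rwa [this] at hre
    have h1 : ((|k| : ℤ) : ℝ) ≤ 1/2 := by push_cast [Int.cast_abs]; exact this
    have h2 : (|k| : ℤ) < 1 := by exact_mod_cast h1.trans_lt (by norm_num : (1:ℝ)/2 < 1)
    exact Int.abs_lt_one_iff.mp h2
  rw [hw, hk0]; simp

lemma theta_FE_zero_iff (z τ : ℂ) (hτ : 0 < τ.im) :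
    jacobiTheta₂ z τ = 0 ↔ jacobiTheta₂ (z/τ) (-1/τ) = 0 := by
  rw [jacobiTheta₂_functional_equation z τ]
  have hτ0 : τ ≠ 0 := fun h => by simp [h] at hτ
  have h1 : (-I*τ) ≠ 0 := mul_ne_zero (neg_ne_zero.2 I_ne_zero) hτ0
  have h2 : ((-I*τ) ^ (1/2 : ℂ)) ≠ 0 := by
    rw [Ne, Complex.cpow_eq_zero_iff]
    tauto
  have hAB : (1 / (-I*τ) ^ (1/2:ℂ) * cexp (-(Real.pi:ℂ)*I*z^2/τ)) ≠ 0 :=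
    mul_ne_zero (one_div_ne_zero h2) (Complex.exp_ne_zero _)
  constructor
  · intro h
    rcases mul_eq_zero.mp h with h | h
    · exact absurd h hAB
    · exact h
  · intro h
    rw [h, mul_zero]

lemma main_ge_one (s : ℝ) (hs : 1 ≤ s) (z : ℂ) (h : jacobiTheta₂ z (I*s) = 0) :
    ∃ m n : ℤ, z = ((m:ℂ) + 1/2) + ((n:ℂ) + 1/2) * s * I := by
  have hs0 : 0 < s := lt_of_lt_of_le one_pos hs
  set m := ⌊z.re⌋ with hm
  set n := ⌊z.im / s⌋ with hn
  set w := z - (1 + I*s)/2 - m - n*(I*s) with hw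
  have hz : z = ((1 + I*s)/2 + w) + m + n*(I*s) := by rw [hw]; ring
  have h2 : jacobiTheta₂ ((1 + I*s)/2 + w) (I*s) = 0 := by
    rw [← theta_shift_zero_iff ((1 + I*(s:ℂ))/2 + w) (I*s) m n, ← hz]; exact h
  have hwre : w.re = z.re - 1/2 - m := by
    rw [hw]
    simp [Complex.div_re, Complex.normSq]
  have hwim : w.im = z.im - s/2 - n*s := by
    rw [hw]
    simp [Complex.div_im, Complex.normSq]
  have hre : |w.re| ≤ 1/2 := by
    rw [hwre]
    have hf1 := Int.floor_le z.re
    have hf2 := Int.lt_floor_add_one z.re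
    rw [abs_le]; constructor <;> [linarith; linarith]
  have him : |w.im| ≤ s/2 := by
    rw [hwim]
    have hf1 := Int.floor_le (z.im / s)
    have hf2 := Int.lt_floor_add_one (z.im / s)
    have hg1 : (n:ℝ) * s ≤ z.im := by
      rw [hn]
      calc (⌊z.im / s⌋ : ℝ) * s ≤ (z.im / s) * s := by
            apply mul_le_mul_of_nonneg_right (Int.floor_le _) hs0.le
        _ = z.im := by field_simp
    have hg2 : z.im < ((n:ℝ) + 1) * s := by
      rw [hn]
      calc z.im = (z.im / s) * s := by field_simp
        _ < ((⌊z.im / s⌋ : ℝ) + 1) * s := by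
            apply mul_lt_mul_of_pos_right (Int.lt_floor_add_one _) hs0
    rw [abs_le]; constructor <;> nlinarith
  have hw0 : w = 0 := local_zero s hs w hre him h2
  refine ⟨m, n, ?_⟩
  rw [hz, hw0]
  push_cast
  ring

/-- Zeros of Jacobi's theta function on the positive imaginary axis: for
`s > 0`, `θ(z, i·s) = 0` if and only if `z = (m + 1/2) + (n + 1/2)·s·i` for
some integers `m, n`. -/
theorem jacobiTheta₂_eq_zero_iff (s : ℝ) (hs : 0 < s) (z : ℂ) :
    jacobiTheta₂ z (Complex.I * s) = 0 ↔
      ∃ m n : ℤ, z = ((m : ℂ) + 1 / 2) + ((n : ℂ) + 1 / 2) * s * Complex.I := by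
  constructor
  · intro h
    rcases le_or_gt 1 s with h1 | h1
    · exact main_ge_one s h1 z h
    · have hτ : 0 < (I*(s:ℂ)).im := by simp [hs]
      rw [theta_FE_zero_iff z _ hτ] at h
      have hs' : (1:ℝ) ≤ 1/s := by
        rw [le_div_iff₀ hs]; linarith
      have hsne : (s:ℂ) ≠ 0 := Complex.ofReal_ne_zero.2 hs.ne'
      have heq : (-1/(I*(s:ℂ))) = I * ((1/s : ℝ):ℂ) := by
        push_cast
        field_simp
        linear_combination (-1:ℂ) * Complex.I_sq
      rw [heq] at h
      obtain ⟨m, n, hmn⟩ := main_ge_one (1/s) hs' _ h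
      refine ⟨-n-1, m, ?_⟩
      have hIs : (I*(s:ℂ)) ≠ 0 := mul_ne_zero I_ne_zero hsne
      have hz : z = (I*(s:ℂ)) * (((m:ℂ) + 1/2) + ((n:ℂ) + 1/2) * ((1/s : ℝ):ℂ) * I) := by
        rw [← hmn]
        field_simp
      rw [hz]
      push_cast
      field_simp
      linear_combination ((1:ℂ) + 2*n) * Complex.I_sq
  · rintro ⟨m, n, rfl⟩
    have h0 : jacobiTheta₂ ((1 + I*(s:ℂ))/2) (I*s) = 0 := theta_halfpoint s hs
    have h3 := (theta_shift_zero_iff ((1 + I*(s:ℂ))/2) (I*s) m n).2 h0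
    rw [show ((m:ℂ) + 1/2) + ((n:ℂ) + 1/2) * s * I = (1 + I*(s:ℂ))/2 + m + n*(I*s) by
      push_cast; ring]
    exact h3

end
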